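/- Let A be a unital C*-algebra and let q₀, q₁ ∈ A be self-adjoint elements such that q₁² = 1 and such that for every t ∈ [0,1] one has 0 ≤ q₀ + t·q₁ ≤ 1 in the canonical order of A. Then q₀ = (1 − q₁)/2. In particular, writing P = (1 + q₁)/2, the element P is a self-adjoint projection, q₀ = 1 − P, and q₀ commutes with q₁. -/

import Mathlib

/-- If `q₀, q₁` are self-adjoint elements of a unital C*-algebra with `q₁² = 1` and
`0 ≤ q₀ + t·q₁ ≤ 1` for all `t ∈ [0,1]`, then `q₀ = (1 - q₁)/2`; in particular
`P = (1 + q₁)/2` is a self-adjoint projection, `q₀ = 1 - P`, and `q₀` commutes with `q₁`. -/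
theorem selfadjoint_reflection_order_constraint
    {A : Type*} [CStarAlgebra A] [PartialOrder A] [StarOrderedRing A]
    (q₀ q₁ : A) (h₀ : IsSelfAdjoint q₀) (h₁ : IsSelfAdjoint q₁)
    (hq₁ : q₁ ^ 2 = 1)
    (hord : ∀ t : ℝ, t ∈ Set.Icc (0 : ℝ) 1 →
      (0 : A) ≤ q₀ + t • q₁ ∧ q₀ + t • q₁ ≤ 1) :
    q₀ = (2 : ℝ)⁻¹ • (1 - q₁) ∧
    IsSelfAdjoint ((2 : ℝ)⁻¹ • (1 + q₁)) ∧
    IsIdempotentElem ((2 : ℝ)⁻¹ • (1 + q₁)) ∧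
    q₀ = 1 - (2 : ℝ)⁻¹ • (1 + q₁) ∧
    Commute q₀ q₁ := by
  have hq : q₁ * q₁ = 1 := by rw [← sq]; exact hq₁
  obtain ⟨h00, h01⟩ := hord 0 ⟨le_refl 0, zero_le_one⟩
  obtain ⟨h10, h11⟩ := hord 1 ⟨zero_le_one, le_refl 1⟩
  rw [zero_smul, add_zero] at h00 h01
  rw [one_smul] at h10 h11
  set e : A := 1 + q₁ with he_def
  set f : A := 1 - q₁ with hf_def
  have hse : star e = e := by simp [he_def, h₁.star_eq]
  have hsf : star f = f := by simp [hf_def, h₁.star_eq]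
  have heq : e * q₁ = e := by
    rw [he_def, add_mul, one_mul, hq, add_comm]
  have hfq : f * q₁ = -f := by
    rw [hf_def, sub_mul, one_mul, hq, neg_sub]
  -- e * q₀ * e = 0
  have l1 : 0 ≤ e * q₀ * e := by
    have := star_left_conjugate_nonneg h00 e
    rwa [hse] at this
  have l2 : e * q₀ * e ≤ 0 := by
    have h1' : (0 : A) ≤ 1 - (q₀ + q₁) := sub_nonneg.2 h11
    have := star_left_conjugate_nonneg h1' e
    rw [hse] at this
    have hexp : e * (1 - (q₀ + q₁)) * e = -(e * q₀ * e) := by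
      have : e * (1 - (q₀ + q₁)) * e = e * e - e * q₀ * e - e * q₁ * e := by
        noncomm_ring
      rw [this, heq]
      abel
    rw [hexp] at this
    exact neg_nonneg.1 this
  have heqe : e * q₀ * e = 0 := le_antisymm l2 l1
  -- f * q₀ * f = f * f
  have m1 : f * f ≤ f * q₀ * f := by
    have := star_left_conjugate_nonneg h10 f
    rw [hsf] at this
    have hexp : f * (q₀ + q₁) * f = f * q₀ * f - f * f := by
      have : f * (q₀ + q₁) * f = f * q₀ * f + f * q₁ * f := by noncomm_ring
      rw [this, hfq, neg_mul]
      abel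
    rw [hexp] at this
    exact sub_nonneg.1 this
  have m2 : f * q₀ * f ≤ f * f := by
    have h1' : (0 : A) ≤ 1 - q₀ := sub_nonneg.2 h01
    have := star_left_conjugate_nonneg h1' f
    rw [hsf] at this
    have hexp : f * (1 - q₀) * f = f * f - f * q₀ * f := by noncomm_ring
    rw [hexp] at this
    exact sub_nonneg.1 this
  have hfqf : f * q₀ * f = f * f := le_antisymm m2 m1
  -- q₀ * e = 0
  have hq0e : q₀ * e = 0 := by
    set s := CFC.sqrt q₀ with hs_def
    have hs2 : s * s = q₀ := CFC.sqrt_mul_sqrt_self q₀ h00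
    have hss : star s = s := (IsSelfAdjoint.of_nonneg (CFC.sqrt_nonneg q₀)).star_eq
    have hse0 : s * e = 0 := by
      rw [← CStarRing.star_mul_self_eq_zero_iff (s * e)]
      rw [star_mul, hse, hss]
      calc e * s * (s * e) = e * (s * s) * e := by noncomm_ring
        _ = 0 := by rw [hs2, heqe]
    calc q₀ * e = s * (s * e) := by rw [← mul_assoc, hs2]
      _ = 0 := by rw [hse0, mul_zero]
  -- (1 - q₀) * f = 0
  have hq0f : q₀ * f = f := by
    have h1' : (0 : A) ≤ 1 - q₀ := sub_nonneg.2 h01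
    set s := CFC.sqrt (1 - q₀) with hs_def
    have hs2 : s * s = 1 - q₀ := CFC.sqrt_mul_sqrt_self (1 - q₀) h1'
    have hss : star s = s := (IsSelfAdjoint.of_nonneg (CFC.sqrt_nonneg (1 - q₀))).star_eq
    have hzero : f * (1 - q₀) * f = 0 := by
      have : f * (1 - q₀) * f = f * f - f * q₀ * f := by noncomm_ring
      rw [this, hfqf, sub_self]
    have hsf0 : s * f = 0 := by
      rw [← CStarRing.star_mul_self_eq_zero_iff (s * f)]
      rw [star_mul, hsf, hss]
      calc f * s * (s * f) = f * (s * s) * f := by noncomm_ring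
        _ = 0 := by rw [hs2, hzero]
    have h' : (1 - q₀) * f = 0 := by
      calc (1 - q₀) * f = s * (s * f) := by rw [← mul_assoc, hs2]
        _ = 0 := by rw [hsf0, mul_zero]
    rw [sub_mul, one_mul] at h'
    exact (sub_eq_zero.1 h').symm
  -- conclude
  have hmain : q₀ = (2 : ℝ)⁻¹ • (1 - q₁) := by
    have h2 : q₀ + q₀ = f := by
      have : q₀ * e + q₀ * f = q₀ + q₀ := by
        rw [← mul_add, he_def, hf_def]
        have : (1 + q₁) + (1 - q₁) = (2 : A) := by
          rw [← one_add_one_eq_two]; abel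
        rw [this, mul_two]
      rw [hq0e, zero_add] at this
      rw [← this, hq0f]
    have : (2 : ℝ) • q₀ = f := by rw [two_smul]; exact h2
    calc q₀ = (2 : ℝ)⁻¹ • ((2 : ℝ) • q₀) := by rw [smul_smul]; norm_num
      _ = (2 : ℝ)⁻¹ • (1 - q₁) := by rw [this, hf_def]
  refine ⟨hmain, ?_, ?_, ?_, ?_⟩
  · exact IsSelfAdjoint.smul (star_trivial _) ((IsSelfAdjoint.one A).add h₁)
  · have hee : e * e = e + e := by
      rw [he_def]
      calc (1 + q₁) * (1 + q₁) = 1 + q₁ + q₁ + q₁ * q₁ := by noncomm_ring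
        _ = (1 + q₁) + (1 + q₁) := by rw [hq]; abel
    show ((2 : ℝ)⁻¹ • (1 + q₁)) * ((2 : ℝ)⁻¹ • (1 + q₁)) = (2 : ℝ)⁻¹ • (1 + q₁)
    rw [← he_def, smul_mul_assoc, mul_smul_comm, hee, smul_smul, smul_add]
    module
  · rw [hmain]; module
  · rw [hmain, Commute, SemiconjBy, smul_mul_assoc, mul_smul_comm]
    congr 1
    rw [sub_mul, mul_sub, one_mul, mul_one, hq]
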